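/- The characteristic polynomial of M = [[0,1,0],[-1,0,1],[0,-1,1]] is λ³ − λ² + 2λ − 1, and every complex root λ of λ³ − λ² + 2λ − 1 satisfies Re(λ) > 0. -/
import Mathlib
open Matrix Polynomial

theorem stmt1 :
    let M : Matrix (Fin 3) (Fin 3) ℝ := !![0, 1, 0; -1, 0, 1; 0, -1, 1]
    M.charpoly = X ^ 3 - X ^ 2 + 2 * X - 1 ∧
      ∀ lam : ℂ, lam ^ 3 - lam ^ 2 + 2 * lam - 1 = 0 → 0 < lam.re := by
  intro M
  constructor
  · rw [Matrix.charpoly, Matrix.det_fin_three]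
    simp [Matrix.charmatrix_apply, M, Matrix.vecHead, Matrix.vecTail]
    ring
  · intro lam h
    set x := lam.re with hx
    set y := lam.im with hy
    have hre : x^3 - 3*x*y^2 - x^2 + y^2 + 2*x - 1 = 0 := by
      have := congrArg Complex.re h
      simp [pow_succ, Complex.mul_re, Complex.mul_im] at this
      linarith [this]
    have him : y * (3*x^2 - y^2 - 2*x + 2) = 0 := by
      have := congrArg Complex.im h
      simp [pow_succ, Complex.mul_re, Complex.mul_im] at this
      nlinarith [this]
    by_contra hle
    push_neg at hle
    rcases mul_eq_zero.mp him with h0 | h1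
    · rw [h0] at hre; nlinarith
    · nlinarith [hre, h1, sq_nonneg y]
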